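/- For integers d ≥ 1, the coefficient a(i; d, m) of x^m in γ^i(x) — where γ(x,t) = λ(x, t/(1-t)) and λ(x,t) = exp(Σ_{n≥1} ((-1)^{n-1}/n) n^d x tⁿ) formally in ℚ[x][[t]] — vanishes whenever m·d < i. -/

import Mathlib

/-- Stirling numbers of the second kind. -/
def stirling2 : ℕ → ℕ → ℕ
  | 0, 0 => 1
  | 0, _ + 1 => 0
  | _ + 1, 0 => 0
  | n + 1, k + 1 => (k + 1) * stirling2 n (k + 1) + stirling2 n k

/-- The power series `t/(1-t) = t + t² + t³ + ⋯` over `ℚ`. -/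
noncomputable def tOneSubT : PowerSeries ℚ := PowerSeries.mk fun n => if n = 0 then 0 else 1

/-- `F_d(t) = ∑_{n ≥ 1} ((-1)^{n-1}/n) n^d (t/(1-t))^n`, so that
`γ(x,t) = λ(x, t/(1-t)) = exp(x · F_d(t))` for `ψ^n(x) = n^d x`. -/
noncomputable def Fser (d : ℕ) : PowerSeries ℚ :=
  PowerSeries.mk fun i => ∑ n ∈ Finset.range (i + 1),
    (if n = 0 then (0 : ℚ) else (-1) ^ (n - 1) / (n : ℚ) * (n : ℚ) ^ d) *
      PowerSeries.coeff i (tOneSubT ^ n)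

/-- The coefficient of `t^i` in `exp(x · F_d(t)) ∈ ℚ[x][[t]]`, as a polynomial in `x`. -/
noncomputable def gammaPoly (d i : ℕ) : Polynomial ℚ :=
  ∑ m ∈ Finset.range (i + 1),
    Polynomial.C ((Nat.factorial m : ℚ)⁻¹ * PowerSeries.coeff i (Fser d ^ m)) *
      Polynomial.X ^ m

/-- The universal coefficient `a(i; d, m)` of `x^m` in `γ^i(x)`. -/
noncomputable def acoef (i d m : ℕ) : ℚ := (gammaPoly d i).coeff m

open Finset PowerSeries

section auxiliary

lemma fwdDiff_iter_zero_fun (N : ℕ) (y : ℚ) : (fwdDiff (1:ℚ))^[N] (fun _ => (0:ℚ)) y = 0 := by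
  rw [fwdDiff_iter_eq_sum_shift]
  simp

lemma fwdDiff_pow_succ (e : ℕ) :
    fwdDiff (1:ℚ) (fun x : ℚ => x ^ (e+1))
      = fun x => ∑ k ∈ range (e+1), (Nat.choose (e+1) k : ℚ) * x ^ k := by
  funext x
  have h := add_pow x (1:ℚ) (e+1)
  simp only [one_pow, mul_one] at h
  rw [fwdDiff, h, Finset.sum_range_succ]
  simp [mul_comm]

lemma fwdDiff_iter_pow_eq_zero (e : ℕ) :
    ∀ N y, e < N → (fwdDiff (1:ℚ))^[N] (fun x : ℚ => x ^ e) y = 0 := by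
  induction e using Nat.strong_induction_on with
  | _ e IH =>
    intro N y heN
    obtain ⟨N', rfl⟩ : ∃ N', N = N' + 1 := ⟨N - 1, by omega⟩
    rw [Function.iterate_succ_apply]
    cases e with
    | zero =>
      simp only [pow_zero, fwdDiff_const]
      exact fwdDiff_iter_zero_fun N' y
    | succ e' =>
      rw [fwdDiff_pow_succ]
      have : (fun x : ℚ => ∑ k ∈ range (e'+1), (Nat.choose (e'+1) k : ℚ) * x ^ k)
          = ∑ k ∈ range (e'+1), (Nat.choose (e'+1) k : ℚ) • (fun x : ℚ => x ^ k) := by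
        funext x; simp [smul_eq_mul]
      rw [this, fwdDiff_iter_finset_sum, Finset.sum_apply]
      apply Finset.sum_eq_zero
      intro k hk
      simp only [Finset.mem_range] at hk
      rw [fwdDiff_iter_const_smul, Pi.smul_apply, IH k (by omega) N' y (by omega), smul_zero]

lemma alt_sum (e N : ℕ) (h : e < N) :
    ∑ j ∈ range (N+1), (-1:ℚ)^j * (N.choose j : ℚ) * ((j:ℚ)+1)^e = 0 := by
  have h0 := fwdDiff_iter_pow_eq_zero e N 1 h
  rw [fwdDiff_iter_eq_sum_shift] at h0
  have key : ∑ j ∈ range (N+1), (-1:ℚ)^j * (N.choose j : ℚ) * ((j:ℚ)+1)^e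
      = (-1:ℚ)^N * ∑ k ∈ range (N+1),
          ((-1:ℤ) ^ (N - k) * (N.choose k : ℤ)) • ((1:ℚ) + k • (1:ℚ)) ^ e := by
    rw [Finset.mul_sum]
    refine Finset.sum_congr rfl fun j hj => ?_
    simp only [Finset.mem_range] at hj
    have h2 : (-1:ℚ)^(N-j) = (-1:ℚ)^(N+j) := by
      calc (-1:ℚ)^(N-j) = (-1:ℚ)^(N-j) * ((-1:ℚ)^2)^j := by norm_num
        _ = (-1:ℚ)^(N-j+2*j) := by rw [← pow_mul, ← pow_add]
        _ = (-1:ℚ)^(N+j) := by congr 1; omega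
    have h3 : (-1:ℚ)^N * (-1:ℚ)^(N+j) = (-1:ℚ)^j := by
      rw [← pow_add, show N + (N+j) = 2*N + j by omega, pow_add, pow_mul]
      norm_num
    rw [zsmul_eq_mul, nsmul_eq_mul, mul_one]
    push_cast
    rw [h2, ← mul_assoc, ← mul_assoc, h3]
    ring
  rw [key, h0, mul_zero]

lemma tOneSubT_eq : tOneSubT = PowerSeries.X * (PowerSeries.invOneSubPow ℚ 1).val := by
  rw [invOneSubPow_val_eq_mk_sub_one_add_choose_of_pos ℚ 1 one_pos]
  ext i
  cases i with
  | zero => simp [tOneSubT, PowerSeries.coeff_zero_eq_constantCoeff]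
  | succ n => rw [coeff_succ_X_mul]; simp [tOneSubT]

lemma tOneSubT_pow (n : ℕ) :
    tOneSubT ^ n = PowerSeries.X ^ n * (PowerSeries.invOneSubPow ℚ n).val := by
  have h : (PowerSeries.invOneSubPow ℚ 1) ^ n = PowerSeries.invOneSubPow ℚ n := by
    rw [invOneSubPow_eq_inv_one_sub_pow ℚ 1, invOneSubPow_eq_inv_one_sub_pow ℚ n,
      ← pow_mul, one_mul]
  rw [tOneSubT_eq, mul_pow, ← Units.val_pow_eq_pow_val, h]

lemma coeff_tOneSubT_pow (n i : ℕ) (hn : 1 ≤ n) :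
    PowerSeries.coeff i (tOneSubT ^ n) =
      if n ≤ i then ((i - 1).choose (n - 1) : ℚ) else 0 := by
  rw [tOneSubT_pow, PowerSeries.coeff_X_pow_mul',
    invOneSubPow_val_eq_mk_sub_one_add_choose_of_pos ℚ n hn]
  split_ifs with h
  · rw [PowerSeries.coeff_mk]
    congr 2
    omega
  · rfl

lemma coeff_Fser_eq_zero (d i : ℕ) (hd : 1 ≤ d) (hi : d < i) :
    PowerSeries.coeff i (Fser d) = 0 := by
  obtain ⟨N, rfl⟩ : ∃ N, i = N + 1 := ⟨i-1, by omega⟩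
  obtain ⟨e, rfl⟩ : ∃ e, d = e + 1 := ⟨d-1, by omega⟩
  rw [Fser, PowerSeries.coeff_mk, Finset.sum_range_succ']
  have h0 : (if (0:ℕ) = 0 then (0 : ℚ) else (-1) ^ (0 - 1) / ((0:ℕ) : ℚ) * ((0:ℕ) : ℚ) ^ (e+1)) *
      PowerSeries.coeff (N+1) (tOneSubT ^ 0) = 0 := by simp
  rw [h0, add_zero]
  have key : ∀ j ∈ range (N+1),
      (if j + 1 = 0 then (0 : ℚ)
        else (-1) ^ (j + 1 - 1) / ((j+1 : ℕ) : ℚ) * ((j+1 : ℕ) : ℚ) ^ (e+1)) *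
        PowerSeries.coeff (N+1) (tOneSubT ^ (j+1))
      = (-1:ℚ)^j * (N.choose j : ℚ) * ((j:ℚ)+1)^e := by
    intro j hj
    simp only [Finset.mem_range] at hj
    rw [coeff_tOneSubT_pow (j+1) (N+1) (by omega)]
    rw [if_neg (Nat.succ_ne_zero j), if_pos (show j + 1 ≤ N + 1 by omega)]
    have hne : ((j:ℚ) + 1) ≠ 0 := by positivity
    simp only [Nat.add_sub_cancel]
    push_cast
    field_simp
    ring
  rw [Finset.sum_congr rfl key, alt_sum e N (by omega)]

lemma coeff_Fser_pow_eq_zero (d : ℕ) (hd : 1 ≤ d) :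
    ∀ m i, m * d < i → PowerSeries.coeff i (Fser d ^ m) = 0 := by
  intro m
  induction m with
  | zero =>
    intro i hi
    rw [pow_zero, PowerSeries.coeff_one, if_neg (by omega)]
  | succ m IH =>
    intro i hi
    have hmd : (m+1)*d = m*d + d := by ring
    rw [pow_succ, PowerSeries.coeff_mul]
    refine Finset.sum_eq_zero fun p hp => ?_
    rw [Finset.HasAntidiagonal.mem_antidiagonal] at hp
    by_cases h1 : m * d < p.1
    · rw [IH p.1 h1, zero_mul]
    · rw [coeff_Fser_eq_zero d p.2 hd (by omega), mul_zero]

end auxiliary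

/-- For `d ≥ 1`, the coefficient `a(i; d, m)` of `x^m t^i` in
`exp(x · ∑_{n≥1} ((-1)^{n-1}/n) n^d (t/(1-t))^n)` vanishes whenever `m·d < i`. -/
theorem stmt_10 (d i m : ℕ) (hd : 1 ≤ d) (h : m * d < i) : acoef i d m = 0 := by
  unfold acoef gammaPoly
  rw [Polynomial.finset_sum_coeff]
  simp only [Polynomial.coeff_C_mul, Polynomial.coeff_X_pow, mul_ite, mul_one, mul_zero]
  rw [Finset.sum_ite_eq (range (i+1)) m]
  split_ifs with hm
  · rw [coeff_Fser_pow_eq_zero d hd m i h, mul_zero]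
  · rfl
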